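/- Let G be a word-representable (i.e., 0-11-representable) simple graph, let v be a vertex of G, and let N be a subset of the set of neighbours of v in G. Then the graph G_N, obtained from G by deleting all edges uv with u ∈ N (keeping all vertices), is 1-11-representable. -/

import Mathlib

/-- Number of occurrences of the consecutive pattern 11 in a word,
i.e. the number of positions `i` with `u i = u (i+1)`. -/
def pattern11Count {V : Type*} [DecidableEq V] (u : List V) : ℕ :=
  (u.zip u.tail).countP (fun p => decide (p.1 = p.2))

/-- `w` is a `k`-11-representant of the simple graph `G`: every vertex occurs in `w`,
and two distinct vertices are adjacent iff the subword of `w` induced by them contains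
at most `k` occurrences of the consecutive pattern 11. -/
def IsK11Rep {V : Type*} [DecidableEq V] (G : SimpleGraph V) (k : ℕ) (w : List V) : Prop :=
  (∀ v : V, v ∈ w) ∧
  ∀ x y : V, x ≠ y →
    (G.Adj x y ↔ pattern11Count (w.filter (fun a => decide (a = x ∨ a = y))) ≤ k)

/-- A simple graph is `k`-11-representable if it has a `k`-11-representant. -/
def K11Representable {V : Type*} [DecidableEq V] (G : SimpleGraph V) (k : ℕ) : Prop :=
  ∃ w : List V, IsK11Rep G k w

/-- A graph is `t`-uniformly `k`-11-representable if it has a `k`-11-representant in which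
every vertex occurs exactly `t` times. -/
def UniformK11Rep {V : Type*} [DecidableEq V] (G : SimpleGraph V) (t k : ℕ) : Prop :=
  ∃ w : List V, IsK11Rep G k w ∧ ∀ v : V, w.count v = t

/-- The final permutation `σ(w)`: distinct letters of `w` in order of last occurrence. -/
def finalPerm {V : Type*} [DecidableEq V] (w : List V) : List V := w.dedup

/-- The initial permutation `π(w)`: distinct letters of `w` in order of first occurrence. -/
def initPerm {V : Type*} [DecidableEq V] (w : List V) : List V := (w.reverse.dedup).reverse

set_option linter.unusedSectionVars false
namespace K11Aux
variable {V : Type*} [DecidableEq V]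

lemma p11_nil : pattern11Count ([] : List V) = 0 := rfl

lemma p11_singleton (a : V) : pattern11Count [a] = 0 := rfl

lemma p11_cons (a : V) (l : List V) :
    pattern11Count (a :: l) = (if l.head? = some a then 1 else 0) + pattern11Count l := by
  cases l with
  | nil => simp [pattern11Count]
  | cons b t =>
    simp only [pattern11Count, List.tail_cons, List.zip_cons_cons, List.countP_cons,
      List.head?_cons]
    by_cases h : a = b <;> simp [h, eq_comm, Nat.add_comm]

/-- junction count between a last element and a list -/
def junc (o : Option V) (l : List V) : ℕ :=
  match o, l.head? with
  | some x, some y => if x = y then 1 else 0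
  | _, _ => 0

@[simp] lemma junc_none (l : List V) : junc none l = 0 := rfl

@[simp] lemma junc_nil (o : Option V) : junc o [] = 0 := by cases o <;> rfl

lemma junc_some (c : V) (l : List V) :
    junc (some c) l = if l.head? = some c then 1 else 0 := by
  unfold junc
  cases h : l.head? with
  | none => simp
  | some y => by_cases hy : c = y <;> simp [hy, eq_comm]

lemma p11_append (a b : List V) :
    pattern11Count (a ++ b) = pattern11Count a + pattern11Count b + junc a.getLast? b := by
  induction a with
  | nil => simp [p11_nil]
  | cons x t ih =>
    cases t with
    | nil =>
      have : ([x] : List V).getLast? = some x := rfl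
      rw [List.singleton_append, p11_cons, this, junc_some, p11_singleton]
      omega
    | cons y s =>
      have h1 : (x :: y :: s) ++ b = x :: ((y :: s) ++ b) := rfl
      have h2 : ((y :: s) ++ b).head? = some y := rfl
      have h3 : (x :: y :: s).getLast? = (y :: s).getLast? := List.getLast?_cons_cons
      rw [h1]
      simp only [p11_cons, ih, h2, h3, List.head?_cons]
      by_cases hyx : some y = some x <;> simp only [hyx, if_true, if_false] <;> omega

lemma p11_append_ge (a b : List V) :
    pattern11Count a + pattern11Count b ≤ pattern11Count (a ++ b) := by
  rw [p11_append]; omega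

end K11Aux

set_option linter.unusedSectionVars false
namespace K11Aux
variable {V : Type*} [DecidableEq V]

/-- alternating word a b a b ... of length n -/
def altW (a b : V) : ℕ → List V
  | 0 => []
  | n+1 => a :: altW b a n

@[simp] lemma altW_zero (a b : V) : altW a b 0 = [] := rfl
@[simp] lemma altW_succ (a b : V) (n : ℕ) : altW a b (n+1) = a :: altW b a n := rfl

@[simp] lemma altW_length (a b : V) (n : ℕ) : (altW a b n).length = n := by
  induction n generalizing a b with
  | zero => rfl
  | succ k ih => simp [ih]

lemma altW_head? (a b : V) (n : ℕ) : (altW a b (n+1)).head? = some a := rfl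

lemma altW_ne_nil (a b : V) (n : ℕ) : altW a b (n+1) ≠ [] := by simp

lemma altW_getLast? (a b : V) (n : ℕ) :
    (altW a b (n+1)).getLast? = some (if n % 2 = 0 then a else b) := by
  induction n generalizing a b with
  | zero => rfl
  | succ k ih =>
    have : altW a b (k+2) = a :: altW b a (k+1) := rfl
    rw [this, List.getLast?_cons, ih]
    have h2 : (altW b a (k+1)).getLast? = some (if k % 2 = 0 then b else a) := ih b a
    rcases Nat.even_or_odd k with he | ho
    · have h0 : k % 2 = 0 := Nat.even_iff.mp he
      have h1 : (k+1) % 2 = 1 := by omega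
      simp [h0, h1, List.getLast?_cons, ih]
    · have h0 : k % 2 = 1 := Nat.odd_iff.mp ho
      have h1 : (k+1) % 2 = 0 := by omega
      simp [h0, h1, List.getLast?_cons, ih]

set_option linter.unusedSectionVars false

lemma altW_counts (n : ℕ) : ∀ a b : V, a ≠ b →
    (altW a b n).count a = (n+1)/2 ∧ (altW a b n).count b = n/2 := by
  induction n with
  | zero => intro a b _; simp
  | succ k ih =>
    intro a b hab
    have h := ih b a hab.symm
    rw [altW_succ, List.count_cons, List.count_cons]
    simp [hab, Ne.symm hab, h.1, h.2]
    omega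

lemma altW_p11 (n : ℕ) : ∀ a b : V, a ≠ b → pattern11Count (altW a b n) = 0 := by
  induction n with
  | zero => intro a b _; rfl
  | succ k ih =>
    intro a b hab
    rw [altW_succ, p11_cons, ih b a hab.symm]
    cases k with
    | zero => simp
    | succ m => rw [altW_head? b a m]; simp [Ne.symm hab]

lemma alt_eq_altW : ∀ (m : List V) (x y : V), x ≠ y → pattern11Count m = 0 →
    (∀ z ∈ m, z = x ∨ z = y) →
    m = altW x y m.length ∨ m = altW y x m.length := by
  intro m
  induction m with
  | nil => intro x y _ _ _; left; rfl
  | cons a r ih =>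
    intro x y hxy h0 hmem
    have hr0 : pattern11Count r = 0 := by
      rw [p11_cons] at h0; omega
    have hhead : r.head? ≠ some a := by
      intro hc; rw [p11_cons, hc] at h0; simp at h0
    have hrmem : ∀ z ∈ r, z = x ∨ z = y := fun z hz => hmem z (List.mem_cons_of_mem _ hz)
    have ha := hmem a (List.mem_cons_self)
    have key : ∀ u w : V, u ≠ w → a = u → (∀ z ∈ r, z = u ∨ z = w) →
        r = altW w u r.length := by
      intro u w huw hau hmem'
      rcases ih u w huw hr0 hmem' with h | h
      · cases hr : r with
        | nil => simp
        | cons b t =>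
          exfalso
          rw [hr] at h
          have hlen : (b :: t).length = t.length + 1 := rfl
          rw [hlen] at h
          have hb : b = u := by
            have := congrArg List.head? h
            simp [altW_head?] at this; exact this
          apply hhead
          rw [hr, hb, hau]; rfl
      · exact h
    rcases ha with ha | ha
    · left
      have hr : r = altW y x r.length := key x y hxy ha hrmem
      subst ha
      rw [List.length_cons, altW_succ]
      exact congrArg _ hr
    · right
      have hr : r = altW x y r.length :=
        key y x hxy.symm ha (fun z hz => (hrmem z hz).symm)
      subst ha
      rw [List.length_cons, altW_succ]
      exact congrArg _ hr

lemma edge_head_last (m : List V) (x y : V) (hxy : x ≠ y)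
    (h0 : pattern11Count m = 0) (hmem : ∀ z ∈ m, z = x ∨ z = y)
    (hx : x ∈ m) (hcnt : m.count x = m.count y) :
    ∃ a b : V, ((a = x ∧ b = y) ∨ (a = y ∧ b = x)) ∧
      m.head? = some a ∧ m.getLast? = some b := by
  have hne : m ≠ [] := List.ne_nil_of_mem hx
  rcases alt_eq_altW m x y hxy h0 hmem with hm | hm
  · refine ⟨x, y, Or.inl ⟨rfl, rfl⟩, ?_, ?_⟩
    · cases hn : m.length with
      | zero => exact absurd (List.length_eq_zero_iff.mp hn) hne
      | succ k => rw [hm, hn, altW_head?]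
    · cases hn : m.length with
      | zero => exact absurd (List.length_eq_zero_iff.mp hn) hne
      | succ k =>
        have hc := (altW_counts (k+1) x y hxy)
        rw [hm, hn] at hcnt ⊢
        rw [hc.1, hc.2] at hcnt
        have hk : k % 2 = 1 := by omega
        rw [altW_getLast?, hk]; simp
  · refine ⟨y, x, Or.inr ⟨rfl, rfl⟩, ?_, ?_⟩
    · cases hn : m.length with
      | zero => exact absurd (List.length_eq_zero_iff.mp hn) hne
      | succ k => rw [hm, hn, altW_head?]
    · cases hn : m.length with
      | zero => exact absurd (List.length_eq_zero_iff.mp hn) hne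
      | succ k =>
        have hc := (altW_counts (k+1) y x hxy.symm)
        rw [hm, hn] at hcnt ⊢
        rw [hc.1, hc.2] at hcnt
        have hk : k % 2 = 1 := by omega
        rw [altW_getLast?, hk]; simp

lemma edge_head_of_count_lt (m : List V) (x y : V) (hxy : x ≠ y)
    (h0 : pattern11Count m = 0) (hmem : ∀ z ∈ m, z = x ∨ z = y)
    (hy : y ∈ m) (hcnt : m.count x < m.count y) :
    m.head? = some y := by
  have hne : m ≠ [] := List.ne_nil_of_mem hy
  rcases alt_eq_altW m x y hxy h0 hmem with hm | hm
  · exfalso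
    have hc := altW_counts m.length x y hxy
    rw [hm] at hcnt
    rw [hc.1, hc.2] at hcnt
    omega
  · cases hn : m.length with
    | zero => exact absurd (List.length_eq_zero_iff.mp hn) hne
    | succ k => rw [hm, hn, altW_head?]

lemma getLast?_cons_of_ne_nil (a : V) (t : List V) (h : t ≠ []) :
    (a :: t).getLast? = t.getLast? := by
  have : (a :: t) = [a] ++ t := rfl
  rw [this, List.getLast?_append]
  cases ht : t.getLast? with
  | none => exact absurd (List.getLast?_eq_none_iff.mp ht) h
  | some z => rfl

lemma getLast?_filter_dedup (q : V → Bool) (l : List V) :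
    ((l.dedup).filter q).getLast? = (l.filter q).getLast? := by
  induction l with
  | nil => rfl
  | cons a l ih =>
    by_cases hal : a ∈ l
    · rw [List.dedup_cons_of_mem hal]
      by_cases hqa : q a
      · have hmem : a ∈ l.filter q := List.mem_filter.mpr ⟨hal, hqa⟩
        rw [List.filter_cons_of_pos hqa,
          getLast?_cons_of_ne_nil _ _ (List.ne_nil_of_mem hmem)]
        exact ih
      · rw [List.filter_cons_of_neg (by simpa using hqa)]
        exact ih
    · rw [List.dedup_cons_of_notMem hal]
      by_cases hqa : q a
      · rw [List.filter_cons_of_pos hqa, List.filter_cons_of_pos hqa]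
        by_cases hfl : l.filter q = []
        · have hfd : (l.dedup).filter q = [] := by
            rw [List.eq_nil_iff_forall_not_mem]
            intro z hz
            rcases List.mem_filter.mp hz with ⟨hz1, hz2⟩
            exact (List.eq_nil_iff_forall_not_mem.mp hfl) z
              (List.mem_filter.mpr ⟨List.mem_dedup.mp hz1, hz2⟩)
          rw [hfl, hfd]
        · have hfd : (l.dedup).filter q ≠ [] := by
            rcases List.exists_mem_of_ne_nil _ hfl with ⟨z, hz⟩
            rcases List.mem_filter.mp hz with ⟨hz1, hz2⟩
            exact List.ne_nil_of_mem
              (List.mem_filter.mpr ⟨List.mem_dedup.mpr hz1, hz2⟩)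
          rw [getLast?_cons_of_ne_nil _ _ hfd, getLast?_cons_of_ne_nil _ _ hfl]
          exact ih
      · rw [List.filter_cons_of_neg (by simpa using hqa),
          List.filter_cons_of_neg (by simpa using hqa)]
        exact ih

def initPerm' (w : List V) : List V := (w.reverse.dedup).reverse

lemma mem_initPerm' (w : List V) (z : V) : z ∈ initPerm' w ↔ z ∈ w := by
  simp [initPerm']

lemma nodup_initPerm' (w : List V) : (initPerm' w).Nodup := by
  rw [initPerm', List.nodup_reverse]; exact List.nodup_dedup w.reverse

lemma head?_filter_initPerm' (q : V → Bool) (w : List V) :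
    ((initPerm' w).filter q).head? = (w.filter q).head? := by
  rw [initPerm', List.filter_reverse, List.head?_reverse,
    getLast?_filter_dedup, List.filter_reverse, List.getLast?_reverse]

lemma eq_singleton_of_mem (l : List V) (c : V) (hall : ∀ z ∈ l, z = c)
    (hc : c ∈ l) (hnd : l.Nodup) : l = [c] := by
  cases l with
  | nil => cases hc
  | cons a t =>
    have ha : a = c := hall a (List.mem_cons_self)
    subst ha
    have hnt : a ∉ t := (List.nodup_cons.mp hnd).1
    have ht : t = [] := by
      rw [List.eq_nil_iff_forall_not_mem]
      intro z hz
      exact hnt ((hall z (List.mem_cons_of_mem _ hz)) ▸ hz)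
    rw [ht]

lemma eq_pair_of_mem (l : List V) (x y : V) (hxy : x ≠ y)
    (hall : ∀ z ∈ l, z = x ∨ z = y) (hx : x ∈ l) (hy : y ∈ l) (hnd : l.Nodup) :
    l = [x, y] ∨ l = [y, x] := by
  cases l with
  | nil => cases hx
  | cons a t =>
    have hnt : a ∉ t := (List.nodup_cons.mp hnd).1
    have hndt : t.Nodup := (List.nodup_cons.mp hnd).2
    rcases hall a (List.mem_cons_self) with ha | ha
    · left
      subst ha
      have hyt : y ∈ t := by
        rcases List.mem_cons.mp hy with h | h
        · exact absurd h.symm hxy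
        · exact h
      have : t = [y] := by
        apply eq_singleton_of_mem t y ?_ hyt hndt
        intro z hz
        rcases hall z (List.mem_cons_of_mem _ hz) with h | h
        · exact absurd (h ▸ hz) hnt
        · exact h
      rw [this]
    · right
      subst ha
      have hxt : x ∈ t := by
        rcases List.mem_cons.mp hx with h | h
        · exact absurd h hxy
        · exact h
      have : t = [x] := by
        apply eq_singleton_of_mem t x ?_ hxt hndt
        intro z hz
        rcases hall z (List.mem_cons_of_mem _ hz) with h | h
        · exact h
        · exact absurd (h ▸ hz) hnt
      rw [this]

end K11Aux

namespace K11Aux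
variable {V : Type*} [DecidableEq V]

lemma mem_pairFilter {w : List V} {x y z : V}
    (hz : z ∈ w.filter (fun a => decide (a = x ∨ a = y))) : z = x ∨ z = y := by
  have := (List.mem_filter.mp hz).2
  simpa using this

lemma self_mem_pairFilter_left {w : List V} {x y : V} (hx : x ∈ w) :
    x ∈ w.filter (fun a => decide (a = x ∨ a = y)) :=
  List.mem_filter.mpr ⟨hx, by simp⟩

lemma self_mem_pairFilter_right {w : List V} {x y : V} (hy : y ∈ w) :
    y ∈ w.filter (fun a => decide (a = x ∨ a = y)) :=
  List.mem_filter.mpr ⟨hy, by simp⟩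

lemma count_pairFilter_left (w : List V) (x y : V) :
    (w.filter (fun a => decide (a = x ∨ a = y))).count x = w.count x :=
  List.count_filter (by simp)

lemma count_pairFilter_right (w : List V) (x y : V) :
    (w.filter (fun a => decide (a = x ∨ a = y))).count y = w.count y :=
  List.count_filter (by simp)

end K11Aux

namespace K11The
open K11Aux
variable {V : Type*} [DecidableEq V] [Fintype V]

lemma step_rep (G : SimpleGraph V) (w : List V) (hw : IsK11Rep G 0 w)
    (M : ℕ) (hM : M = Finset.univ.sup w.count) :
    IsK11Rep G 0 ((initPerm' w).filter (fun z => decide (w.count z < M)) ++ w) := by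
  set p := (initPerm' w).filter (fun z => decide (w.count z < M)) with hp
  constructor
  · intro z; exact List.mem_append_right _ (hw.1 z)
  · intro x y hxy
    set q : V → Bool := fun a => decide (a = x ∨ a = y) with hq
    set m : List V := w.filter q with hm
    have hiff : G.Adj x y ↔ pattern11Count m ≤ 0 := hw.2 x y hxy
    have hcx : m.count x = w.count x := count_pairFilter_left w x y
    have hcy : m.count y = w.count y := count_pairFilter_right w x y
    have hmem : ∀ z ∈ m, z = x ∨ z = y := fun z hz => mem_pairFilter hz
    have hxm : x ∈ m := self_mem_pairFilter_left (hw.1 x)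
    have hym : y ∈ m := self_mem_pairFilter_right (hw.1 y)
    have hfil : (p ++ w).filter q = p.filter q ++ m := by
      rw [List.filter_append]
    rw [hfil, Nat.le_zero]
    rw [Nat.le_zero] at hiff
    constructor
    · intro hadj
      have h0 : pattern11Count m = 0 := hiff.mp hadj
      -- case analysis on counts
      by_cases hx : w.count x < M <;> by_cases hy : w.count y < M
      · -- both
        have hpf : p.filter q = (initPerm' w).filter q := by
          rw [hp, List.filter_filter]
          apply List.filter_congr
          intro z _
          by_cases hzq : q z = true
          · have : z = x ∨ z = y := by rw [hq] at hzq; simpa using hzq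
            rcases this with rfl | rfl <;> simp [hzq, hx, hy]
          · simp only [Bool.not_eq_true] at hzq
            rw [hzq, Bool.false_and]

        have hhead : (p.filter q).head? = m.head? := by
          rw [hpf, hm, hq]; exact head?_filter_initPerm' q w
        have hxp : x ∈ p.filter q := by
          refine List.mem_filter.mpr ⟨?_, by simp [hq]⟩
          exact List.mem_filter.mpr ⟨(mem_initPerm' w x).mpr (hw.1 x), by simpa using hx⟩
        have hyp : y ∈ p.filter q := by
          refine List.mem_filter.mpr ⟨?_, by simp [hq]⟩
          exact List.mem_filter.mpr ⟨(mem_initPerm' w y).mpr (hw.1 y), by simpa using hy⟩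
        have hnd : (p.filter q).Nodup :=
          List.Nodup.filter _ (List.Nodup.filter _ (nodup_initPerm' w))
        have hallp : ∀ z ∈ p.filter q, z = x ∨ z = y := by
          intro z hz
          have := (List.mem_filter.mp hz).2
          rw [hq] at this; simpa using this
        rcases eq_pair_of_mem _ x y hxy hallp hxp hyp hnd with hpair | hpair
        · have hmx : m.head? = some x := by rw [← hhead, hpair]; rfl
          rw [p11_append, hpair, h0]
          have : pattern11Count [x, y] = 0 := by
            rw [p11_cons, p11_singleton]; simp [Ne.symm hxy]
          rw [this]
          have hlast : ([x, y] : List V).getLast? = some y := rfl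
          rw [hlast, junc_some, hmx]
          simp [hxy]
        · have hmy : m.head? = some y := by rw [← hhead, hpair]; rfl
          rw [p11_append, hpair, h0]
          have : pattern11Count [y, x] = 0 := by
            rw [p11_cons, p11_singleton]; simp [hxy]
          rw [this]
          have hlast : ([y, x] : List V).getLast? = some x := rfl
          rw [hlast, junc_some, hmy]
          simp [Ne.symm hxy]
      · -- only x small
        have hyM : w.count y = M := by
          have : w.count y ≤ M := hM ▸ Finset.le_sup (f := w.count) (Finset.mem_univ y)
          omega
        have hpf : p.filter q = [x] := by
          apply eq_singleton_of_mem
          · intro z hz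
            rcases List.mem_filter.mp hz with ⟨hz1, hz2⟩
            have hz3 : z = x ∨ z = y := by rw [hq] at hz2; simpa using hz2
            rcases hz3 with rfl | rfl
            · rfl
            · exfalso
              have := (List.mem_filter.mp hz1).2
              simp at this; omega
          · refine List.mem_filter.mpr ⟨?_, by simp [hq]⟩
            exact List.mem_filter.mpr ⟨(mem_initPerm' w x).mpr (hw.1 x), by simpa using hx⟩
          · exact List.Nodup.filter _ (List.Nodup.filter _ (nodup_initPerm' w))
        have hlt : m.count x < m.count y := by rw [hcx, hcy]; omega
        have hmy : m.head? = some y := edge_head_of_count_lt m x y hxy h0 hmem hym hlt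
        rw [p11_append, hpf, p11_singleton, h0]
        have : ([x] : List V).getLast? = some x := rfl
        rw [this, junc_some, hmy]
        simp [Ne.symm hxy]
      · -- only y small
        have hxM : w.count x = M := by
          have : w.count x ≤ M := hM ▸ Finset.le_sup (f := w.count) (Finset.mem_univ x)
          omega
        have hpf : p.filter q = [y] := by
          apply eq_singleton_of_mem
          · intro z hz
            rcases List.mem_filter.mp hz with ⟨hz1, hz2⟩
            have hz3 : z = x ∨ z = y := by rw [hq] at hz2; simpa using hz2
            rcases hz3 with rfl | rfl
            · exfalso
              have := (List.mem_filter.mp hz1).2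
              simp at this; omega
            · rfl
          · refine List.mem_filter.mpr ⟨?_, by simp [hq]⟩
            exact List.mem_filter.mpr ⟨(mem_initPerm' w y).mpr (hw.1 y), by simpa using hy⟩
          · exact List.Nodup.filter _ (List.Nodup.filter _ (nodup_initPerm' w))
        have hlt : m.count y < m.count x := by rw [hcx, hcy]; omega
        have hmy : m.head? = some x :=
          edge_head_of_count_lt m y x (Ne.symm hxy) h0
            (fun z hz => (hmem z hz).symm) hxm hlt
        rw [p11_append, hpf, p11_singleton, h0]
        have : ([y] : List V).getLast? = some y := rfl
        rw [this, junc_some, hmy]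
        simp [hxy]
      · -- neither
        have hpf : p.filter q = [] := by
          rw [List.eq_nil_iff_forall_not_mem]
          intro z hz
          rcases List.mem_filter.mp hz with ⟨hz1, hz2⟩
          have hz3 : z = x ∨ z = y := by rw [hq] at hz2; simpa using hz2
          have := (List.mem_filter.mp hz1).2
          simp at this
          rcases hz3 with rfl | rfl <;> omega
        rw [hpf, List.nil_append]
        exact h0
    · intro h0
      apply hiff.mpr
      have := p11_append_ge (p.filter q) m
      omega

theorem exists_uniform_rep (G : SimpleGraph V) (h : K11Representable G 0) :
    ∃ w : List V, IsK11Rep G 0 w ∧ ∀ x y : V, w.count x = w.count y := by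
  obtain ⟨w0, hw0⟩ := h
  suffices main : ∀ (n : ℕ) (w : List V), IsK11Rep G 0 w →
      (∑ z : V, (Finset.univ.sup w.count - w.count z)) ≤ n →
      ∃ w' : List V, IsK11Rep G 0 w' ∧ ∀ x y : V, w'.count x = w'.count y by
    exact main _ w0 hw0 le_rfl
  intro n
  induction n with
  | zero =>
    intro w hw hsum
    refine ⟨w, hw, ?_⟩
    have hz : ∀ z : V, Finset.univ.sup w.count - w.count z = 0 := by
      intro z
      have := Finset.sum_eq_zero_iff.mp (Nat.le_zero.mp hsum) z (Finset.mem_univ z)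
      exact this
    intro x y
    have hx := hz x
    have hy := hz y
    have hx' : w.count x ≤ Finset.univ.sup w.count := Finset.le_sup (f := w.count) (Finset.mem_univ x)
    have hy' : w.count y ≤ Finset.univ.sup w.count := Finset.le_sup (f := w.count) (Finset.mem_univ y)
    omega
  | succ n ih =>
    intro w hw hsum
    by_cases huni : ∀ x y : V, w.count x = w.count y
    · exact ⟨w, hw, huni⟩
    · push_neg at huni
      obtain ⟨x0, y0, hne⟩ := huni
      set M := Finset.univ.sup w.count with hM
      have hx0' : w.count x0 ≤ M := Finset.le_sup (f := w.count) (Finset.mem_univ x0)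
      have hy0' : w.count y0 ≤ M := Finset.le_sup (f := w.count) (Finset.mem_univ y0)
      have hexlt : ∃ z0 : V, w.count z0 < M := by
        rcases Nat.lt_or_ge (w.count x0) (w.count y0) with hlt | hge
        · exact ⟨x0, by omega⟩
        · exact ⟨y0, by omega⟩
      obtain ⟨z0, hz0⟩ := hexlt
      set p := (initPerm' w).filter (fun z => decide (w.count z < M)) with hp
      set w₂ := p ++ w with hw₂
      have hrep₂ : IsK11Rep G 0 w₂ := step_rep G w hw M hM
      have hcnt₂ : ∀ z : V, w₂.count z = w.count z + (if w.count z < M then 1 else 0) := by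
        intro z
        rw [hw₂, List.count_append]
        have hcp : p.count z = (if w.count z < M then 1 else 0) := by
          by_cases hzlt : w.count z < M
          · rw [if_pos hzlt]
            apply List.count_eq_one_of_mem
            · exact List.Nodup.filter _ (nodup_initPerm' w)
            · exact List.mem_filter.mpr
                ⟨(mem_initPerm' w z).mpr (hw.1 z), by simpa using hzlt⟩
          · rw [if_neg hzlt]
            apply List.count_eq_zero_of_not_mem
            intro hzin
            have := (List.mem_filter.mp hzin).2
            simp at this
            omega
        omega
      have hle₂ : ∀ z : V, w₂.count z ≤ M := by
        intro z
        have h1 : w.count z ≤ M := Finset.le_sup (f := w.count) (Finset.mem_univ z)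
        rw [hcnt₂ z]
        by_cases hzlt : w.count z < M <;> simp [hzlt] <;> omega
      have hM₂ : Finset.univ.sup w₂.count = M := by
        apply le_antisymm
        · exact Finset.sup_le fun z _ => hle₂ z
        · obtain ⟨zM, _, hzM⟩ := Finset.exists_mem_eq_sup Finset.univ
            ⟨z0, Finset.mem_univ z0⟩ w.count
          have hzMM : w.count zM = M := hzM.symm
          have : w₂.count zM = M := by rw [hcnt₂ zM, hzMM]; simp
          calc M = w₂.count zM := this.symm
            _ ≤ Finset.univ.sup w₂.count := Finset.le_sup (f := w₂.count) (Finset.mem_univ zM)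
      have hsum₂ : (∑ z : V, (Finset.univ.sup w₂.count - w₂.count z)) ≤ n := by
        rw [hM₂]
        have hlt : (∑ z : V, (M - w₂.count z)) < ∑ z : V, (M - w.count z) := by
          apply Finset.sum_lt_sum
          · intro i _
            rw [hcnt₂ i]
            by_cases hzlt : w.count i < M <;> simp [hzlt] <;> omega
          · refine ⟨z0, Finset.mem_univ z0, ?_⟩
            rw [hcnt₂ z0, if_pos hz0]
            omega
        omega
      exact ih w₂ hrep₂ hsum₂

lemma head?_append_left {m : List V} {a : V} (l : List V) (h : m.head? = some a) :
    (m ++ l).head? = some a := by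
  rw [List.head?_append, h]; rfl

lemma ind_le_one {c : Prop} [Decidable c] : (if c then 1 else 0 : ℕ) ≤ 1 := by
  split <;> omega

lemma ind_add_le_one {c d : Prop} [Decidable c] [Decidable d] (h : ¬(c ∧ d)) :
    (if c then 1 else 0) + (if d then 1 else 0 : ℕ) ≤ 1 := by
  by_cases hc : c <;> by_cases hd : d <;> simp_all

lemma case_L1 {m : List V} {a b : V} (hm0 : pattern11Count m = 0)
    (hhead : m.head? = some a) (hlast : m.getLast? = some b) (hab : a ≠ b) :
    pattern11Count (m ++ m) ≤ 1 := by
  rw [p11_append, hm0, hlast, junc_some, hhead]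
  simp [Option.some.injEq, hab]

lemma case_L2 {m : List V} {a b v : V} (hm0 : pattern11Count m = 0)
    (hhead : m.head? = some a) (hlast : m.getLast? = some b) (hab : a ≠ b) :
    pattern11Count (m ++ ([v] ++ m)) ≤ 1 := by
  have h1 : pattern11Count ([v] ++ m) =
      (if (some a : Option V) = some v then 1 else 0) := by
    rw [p11_append, p11_singleton, hm0]
    have hv : ([v] : List V).getLast? = some v := rfl
    rw [hv, junc_some, hhead]
    omega
  have h2 : ([v] ++ m).head? = some v := rfl
  rw [p11_append, hm0, h1, hlast, junc_some, h2]
  have key : ¬((some a : Option V) = some v ∧ (some v : Option V) = some b) := by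
    rintro ⟨hp, hq⟩
    simp only [Option.some.injEq] at hp hq
    exact hab (hp.trans hq)
  have := ind_add_le_one key
  omega

lemma case_L3 {m : List V} {a b u : V} (hm0 : pattern11Count m = 0)
    (hhead : m.head? = some a) (hlast : m.getLast? = some b) (hab : a ≠ b) :
    pattern11Count ([u] ++ (m ++ (m ++ [u]))) ≤ 1 := by
  have e1 : pattern11Count (m ++ [u]) = (if u = b then 1 else 0) := by
    rw [p11_append, hm0, p11_singleton, hlast, junc_some]
    simp [eq_comm]
  have e2 : pattern11Count (m ++ (m ++ [u])) = (if u = b then 1 else 0) := by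
    rw [p11_append, hm0, e1, hlast, junc_some, head?_append_left [u] hhead]
    simp [hab]
  rw [p11_append, p11_singleton, e2]
  have hu : ([u] : List V).getLast? = some u := rfl
  rw [hu, junc_some, head?_append_left (m ++ [u]) hhead]
  have key : ¬(u = b ∧ (some a : Option V) = some u) := by
    rintro ⟨hp, hq⟩
    simp only [Option.some.injEq] at hq
    exact hab (hq.trans hp)
  have := ind_add_le_one key
  omega

lemma case_L4 {m : List V} {a b c d : V} (hm0 : pattern11Count m = 0)
    (hhead : m.head? = some a) (hlast : m.getLast? = some b) (hab : a ≠ b)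
    (hcd : c ≠ d) :
    pattern11Count ([c, d] ++ (m ++ (m ++ [d, c]))) ≤ 1 := by
  have e0 : pattern11Count ([d, c] : List V) = 0 := by
    rw [p11_cons, p11_singleton]; simp [hcd]
  have e1 : pattern11Count (m ++ [d, c]) = (if d = b then 1 else 0) := by
    rw [p11_append, hm0, e0, hlast, junc_some]
    simp [eq_comm]
  have e2 : pattern11Count (m ++ (m ++ [d, c])) = (if d = b then 1 else 0) := by
    rw [p11_append, hm0, e1, hlast, junc_some, head?_append_left [d, c] hhead]
    simp [hab]
  have e3 : pattern11Count ([c, d] : List V) = 0 := by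
    rw [p11_cons, p11_singleton]; simp [hcd.symm]
  rw [p11_append, e3, e2]
  have hl : ([c, d] : List V).getLast? = some d := rfl
  rw [hl, junc_some, head?_append_left (m ++ [d, c]) hhead]
  have key : ¬(d = b ∧ (some a : Option V) = some d) := by
    rintro ⟨hp, hq⟩
    simp only [Option.some.injEq] at hq
    exact hab (hq.trans hp)
  have := ind_add_le_one key
  omega

lemma case_L5 {m : List V} {a b u v : V} (hm0 : pattern11Count m = 0)
    (hhead : m.head? = some a) (hlast : m.getLast? = some b)
    (hcase : (a = u ∧ b = v) ∨ (a = v ∧ b = u)) (huv : u ≠ v) :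
    2 ≤ pattern11Count ([u] ++ (m ++ ([v] ++ (m ++ [u])))) := by
  have e1 : pattern11Count (m ++ [u]) = (if u = b then 1 else 0) := by
    rw [p11_append, hm0, p11_singleton, hlast, junc_some]
    simp [eq_comm]
  have e2 : pattern11Count ([v] ++ (m ++ [u])) =
      (if u = b then 1 else 0) + (if v = a then 1 else 0) := by
    rw [p11_append, p11_singleton, e1]
    have hv : ([v] : List V).getLast? = some v := rfl
    rw [hv, junc_some, head?_append_left [u] hhead]
    simp [eq_comm]
  have e3 : pattern11Count (m ++ ([v] ++ (m ++ [u]))) =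
      (if u = b then 1 else 0) + (if v = a then 1 else 0) +
      (if v = b then 1 else 0) := by
    rw [p11_append, hm0, e2, hlast, junc_some]
    have hh : ([v] ++ (m ++ [u])).head? = some v := rfl
    rw [hh]
    simp [eq_comm]
  rw [p11_append, p11_singleton, e3]
  have hu : ([u] : List V).getLast? = some u := rfl
  rw [hu, junc_some, head?_append_left ([v] ++ (m ++ [u])) hhead]
  rcases hcase with ⟨rfl, rfl⟩ | ⟨rfl, rfl⟩
  · simp [huv, Ne.symm huv]
  · simp [huv, Ne.symm huv]

lemma nonedge_ge_two (s0 s1 s2 : List V) (m : List V)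
    (hm : 1 ≤ pattern11Count m) :
    2 ≤ pattern11Count (s0 ++ (m ++ (s1 ++ (m ++ s2)))) := by
  have h1 := p11_append_ge s0 (m ++ (s1 ++ (m ++ s2)))
  have h2 := p11_append_ge m (s1 ++ (m ++ s2))
  have h3 := p11_append_ge s1 (m ++ s2)
  have h4 := p11_append_ge m s2
  omega

end K11The


open K11Aux K11The in
/-- if `G` is word-representable, `v` is a vertex and `N` is a set of
neighbours of `v`, then the graph obtained from `G` by deleting all edges `uv` with
`u ∈ N` is 1-11-representable. -/
theorem k11Representable_deleteStarEdges {V : Type*} [DecidableEq V] [Fintype V]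
    (G : SimpleGraph V) (v : V) (N : Set V) (hN : N ⊆ G.neighborSet v)
    (h : K11Representable G 0) :
    K11Representable (G.deleteEdges {e : Sym2 V | ∃ u ∈ N, e = s(u, v)}) 1 := by
  classical
  obtain ⟨w, hw, huni⟩ := exists_uniform_rep G h
  set Nf : Finset V := (Set.toFinite N).toFinset with hNf
  set Z : List V := Nf.toList with hZdef
  have hZnd : Z.Nodup := Nf.nodup_toList
  have hZmem : ∀ z : V, z ∈ Z ↔ z ∈ N := by
    intro z
    rw [hZdef, Finset.mem_toList, hNf, Set.Finite.mem_toFinset]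
  have hvN : v ∉ N := by
    intro hv
    exact G.loopless.irrefl v (hN hv)
  set W : List V := Z ++ (w ++ ([v] ++ (w ++ Z.reverse))) with hW
  refine ⟨W, ?_, ?_⟩
  · intro z
    exact List.mem_append_right _ (List.mem_append_left _ (hw.1 z))
  · intro x y hxy
    set q : V → Bool := fun a => decide (a = x ∨ a = y) with hq
    set m : List V := w.filter q with hm
    have hiff : G.Adj x y ↔ pattern11Count m ≤ 0 := hw.2 x y hxy
    have hmem : ∀ z ∈ m, z = x ∨ z = y := fun z hz => mem_pairFilter hz
    have hxm : x ∈ m := self_mem_pairFilter_left (hw.1 x)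
    have hym : y ∈ m := self_mem_pairFilter_right (hw.1 y)
    have hcnt : m.count x = m.count y := by
      rw [hm, hq, count_pairFilter_left, count_pairFilter_right]
      exact huni x y
    have hfil : W.filter q =
        Z.filter q ++ (m ++ (([v].filter q) ++ (m ++ (Z.filter q).reverse))) := by
      rw [hW, List.filter_append, List.filter_append, List.filter_append,
        List.filter_append, List.filter_reverse]
    have hdel : (s(x,y) ∈ {e : Sym2 V | ∃ u ∈ N, e = s(u, v)}) ↔
        ((x ∈ N ∧ y = v) ∨ (y ∈ N ∧ x = v)) := by
      constructor
      · rintro ⟨u, huN, he⟩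
        rcases Sym2.eq_iff.mp he with ⟨rfl, rfl⟩ | ⟨rfl, rfl⟩
        · exact Or.inl ⟨huN, rfl⟩
        · exact Or.inr ⟨huN, rfl⟩
      · rintro (⟨hxN, rfl⟩ | ⟨hyN, rfl⟩)
        · exact ⟨x, hxN, by rw [Sym2.eq_iff]; left; exact ⟨rfl, rfl⟩⟩
        · exact ⟨y, hyN, by rw [Sym2.eq_iff]; right; exact ⟨rfl, rfl⟩⟩
    have hadj_iff : (G.deleteEdges {e : Sym2 V | ∃ u ∈ N, e = s(u, v)}).Adj x y ↔
        (G.Adj x y ∧ ¬((x ∈ N ∧ y = v) ∨ (y ∈ N ∧ x = v))) := by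
      rw [SimpleGraph.deleteEdges_adj, not_congr hdel]
    -- helper facts for the deleted-pair case
    have hL5 : ∀ (hdelc : (x ∈ N ∧ y = v) ∨ (y ∈ N ∧ x = v)),
        2 ≤ pattern11Count (W.filter q) := by
      rintro (⟨hxN, rfl⟩ | ⟨hyN, rfl⟩)
      · -- x ∈ N, y plays the role of v
        have hadj : G.Adj x y := ((G.mem_neighborSet y x).mp (hN hxN)).symm
        have h0 : pattern11Count m = 0 := Nat.le_zero.mp (hiff.mp hadj)
        obtain ⟨a, b, hab', hh, hl⟩ := edge_head_last m x y hxy h0 hmem hxm hcnt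
        have hZq : Z.filter q = [x] := by
          apply eq_singleton_of_mem
          · intro z hz
            rcases List.mem_filter.mp hz with ⟨hz1, hz2⟩
            have : z = x ∨ z = y := by rw [hq] at hz2; simpa using hz2
            rcases this with rfl | rfl
            · rfl
            · exact absurd ((hZmem z).mp hz1) hvN
          · exact List.mem_filter.mpr ⟨(hZmem x).mpr hxN, by simp [hq]⟩
          · exact List.Nodup.filter _ hZnd
        have hmid : ([y].filter q) = [y] := by simp [hq]
        have hshape : W.filter q = [x] ++ (m ++ ([y] ++ (m ++ [x]))) := by
          rw [hfil, hZq, hmid]; simp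
        rw [hshape]
        exact case_L5 h0 hh hl hab' hxy
      · -- y ∈ N, x plays the role of v
        have hadj : G.Adj x y := (G.mem_neighborSet x y).mp (hN hyN)
        have h0 : pattern11Count m = 0 := Nat.le_zero.mp (hiff.mp hadj)
        obtain ⟨a, b, hab', hh, hl⟩ := edge_head_last m x y hxy h0 hmem hxm hcnt
        have hZq : Z.filter q = [y] := by
          apply eq_singleton_of_mem
          · intro z hz
            rcases List.mem_filter.mp hz with ⟨hz1, hz2⟩
            have : z = x ∨ z = y := by rw [hq] at hz2; simpa using hz2
            rcases this with rfl | rfl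
            · exact absurd ((hZmem z).mp hz1) hvN
            · rfl
          · exact List.mem_filter.mpr ⟨(hZmem y).mpr hyN, by simp [hq]⟩
          · exact List.Nodup.filter _ hZnd
        have hmid : ([x].filter q) = [x] := by simp [hq]
        have hshape : W.filter q = [y] ++ (m ++ ([x] ++ (m ++ [y]))) := by
          rw [hfil, hZq, hmid]; simp
        rw [hshape]
        apply case_L5 h0 hh hl ?_ (Ne.symm hxy)
        rcases hab' with ⟨rfl, rfl⟩ | ⟨rfl, rfl⟩
        · right; exact ⟨rfl, rfl⟩
        · left; exact ⟨rfl, rfl⟩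
    rw [hadj_iff]
    constructor
    · rintro ⟨hadj, hnodel⟩
      have h0 : pattern11Count m = 0 := Nat.le_zero.mp (hiff.mp hadj)
      obtain ⟨a, b, hab', hh, hl⟩ := edge_head_last m x y hxy h0 hmem hxm hcnt
      have hab : a ≠ b := by
        rcases hab' with ⟨rfl, rfl⟩ | ⟨rfl, rfl⟩
        · exact hxy
        · exact Ne.symm hxy
      by_cases hxv : x = v
      · -- x = v, so x ∉ N; moreover y ∉ N (else deleted)
        subst hxv
        have hyN : y ∉ N := fun hyN => hnodel (Or.inr ⟨hyN, rfl⟩)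
        have hZq : Z.filter q = [] := by
          rw [List.eq_nil_iff_forall_not_mem]
          intro z hz
          rcases List.mem_filter.mp hz with ⟨hz1, hz2⟩
          have : z = x ∨ z = y := by rw [hq] at hz2; simpa using hz2
          rcases this with rfl | rfl
          · exact hvN ((hZmem z).mp hz1)
          · exact hyN ((hZmem z).mp hz1)
        have hmid : ([x].filter q) = [x] := by simp [hq]
        have hshape : W.filter q = m ++ ([x] ++ m) := by
          rw [hfil, hZq, hmid]; simp
        rw [hshape]
        exact case_L2 h0 hh hl hab
      · by_cases hyv : y = v
        · subst hyv
          have hxN : x ∉ N := fun hxN => hnodel (Or.inl ⟨hxN, rfl⟩)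
          have hZq : Z.filter q = [] := by
            rw [List.eq_nil_iff_forall_not_mem]
            intro z hz
            rcases List.mem_filter.mp hz with ⟨hz1, hz2⟩
            have : z = x ∨ z = y := by rw [hq] at hz2; simpa using hz2
            rcases this with rfl | rfl
            · exact hxN ((hZmem z).mp hz1)
            · exact hvN ((hZmem z).mp hz1)
          have hmid : ([y].filter q) = [y] := by simp [hq]
          have hshape : W.filter q = m ++ ([y] ++ m) := by
            rw [hfil, hZq, hmid]; simp
          rw [hshape]
          exact case_L2 h0 hh hl hab
        · -- neither is v
          have hmid : ([v].filter q) = [] := by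
            simp [hq]
            exact ⟨fun hc => absurd hc.symm hxv, fun hc => absurd hc.symm hyv⟩
          by_cases hxN : x ∈ N <;> by_cases hyN : y ∈ N
          · -- both in N
            have hxZ : x ∈ Z.filter q :=
              List.mem_filter.mpr ⟨(hZmem x).mpr hxN, by simp [hq]⟩
            have hyZ : y ∈ Z.filter q :=
              List.mem_filter.mpr ⟨(hZmem y).mpr hyN, by simp [hq]⟩
            have hall : ∀ z ∈ Z.filter q, z = x ∨ z = y := by
              intro z hz
              have := (List.mem_filter.mp hz).2
              rw [hq] at this; simpa using this
            rcases eq_pair_of_mem _ x y hxy hall hxZ hyZ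
              (List.Nodup.filter _ hZnd) with hpair | hpair
            · have hshape : W.filter q = [x, y] ++ (m ++ (m ++ [y, x])) := by
                rw [hfil, hpair, hmid]; simp
              rw [hshape]
              exact case_L4 h0 hh hl hab hxy
            · have hshape : W.filter q = [y, x] ++ (m ++ (m ++ [x, y])) := by
                rw [hfil, hpair, hmid]; simp
              rw [hshape]
              exact case_L4 h0 hh hl hab (Ne.symm hxy)
          · -- x only
            have hZq : Z.filter q = [x] := by
              apply eq_singleton_of_mem
              · intro z hz
                rcases List.mem_filter.mp hz with ⟨hz1, hz2⟩
                have : z = x ∨ z = y := by rw [hq] at hz2; simpa using hz2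
                rcases this with rfl | rfl
                · rfl
                · exact absurd ((hZmem z).mp hz1) hyN
              · exact List.mem_filter.mpr ⟨(hZmem x).mpr hxN, by simp [hq]⟩
              · exact List.Nodup.filter _ hZnd
            have hshape : W.filter q = [x] ++ (m ++ (m ++ [x])) := by
              rw [hfil, hZq, hmid]; simp
            rw [hshape]
            exact case_L3 h0 hh hl hab
          · -- y only
            have hZq : Z.filter q = [y] := by
              apply eq_singleton_of_mem
              · intro z hz
                rcases List.mem_filter.mp hz with ⟨hz1, hz2⟩
                have : z = x ∨ z = y := by rw [hq] at hz2; simpa using hz2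
                rcases this with rfl | rfl
                · exact absurd ((hZmem z).mp hz1) hxN
                · rfl
              · exact List.mem_filter.mpr ⟨(hZmem y).mpr hyN, by simp [hq]⟩
              · exact List.Nodup.filter _ hZnd
            have hshape : W.filter q = [y] ++ (m ++ (m ++ [y])) := by
              rw [hfil, hZq, hmid]; simp
            rw [hshape]
            exact case_L3 h0 hh hl hab
          · -- neither
            have hZq : Z.filter q = [] := by
              rw [List.eq_nil_iff_forall_not_mem]
              intro z hz
              rcases List.mem_filter.mp hz with ⟨hz1, hz2⟩
              have : z = x ∨ z = y := by rw [hq] at hz2; simpa using hz2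
              rcases this with rfl | rfl
              · exact hxN ((hZmem z).mp hz1)
              · exact hyN ((hZmem z).mp hz1)
            have hshape : W.filter q = m ++ m := by
              rw [hfil, hZq, hmid]; simp
            rw [hshape]
            exact case_L1 h0 hh hl hab
    · intro hle
      constructor
      · by_contra hnadj
        have h1 : 1 ≤ pattern11Count m := by
          by_contra hc
          exact hnadj (hiff.mpr (by omega))
        have := nonedge_ge_two (Z.filter q) ([v].filter q) (Z.filter q).reverse m h1
        rw [hfil] at hle
        omega
      · intro hdelc
        have := hL5 hdelc
        omega
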